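/- For any two reals r₁, r₂ with 1/√2 ≤ r₁ < r₂ ≤ 1, the maximum of A(r₁,x) over x ∈ [0,1/2] is strictly smaller than the maximum of A(r₂,x) over x ∈ [0,1/2]; in particular, for every r with √3/2 < r ≤ 1 one has max_{x∈[0,1/2]} A(r,x) > max_{x∈[0,1/2]} A(√3/2, x). -/
import Mathlib


open Set

/-- `A r x = (1/2)·x·√(3 − 4x − 4x²) + (1/2)·√(r² − x²)`. -/
noncomputable def A (r x : ℝ) : ℝ :=
  1 / 2 * x * Real.sqrt (3 - 4 * x - 4 * x ^ 2) + 1 / 2 * Real.sqrt (r ^ 2 - x ^ 2)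

lemma contA (r : ℝ) : Continuous (A r) := by
  unfold A
  continuity

lemma keyA (r₁ r₂ : ℝ) (h1 : (1:ℝ)/2 ≤ r₁) (h2 : r₁ < r₂) :
    sSup (A r₁ '' Set.Icc (0 : ℝ) (1 / 2)) < sSup (A r₂ '' Set.Icc (0 : ℝ) (1 / 2)) := by
  have hc : IsCompact (Icc (0:ℝ) (1/2)) := isCompact_Icc
  have hne : (Icc (0:ℝ) (1/2)).Nonempty := ⟨0, by norm_num⟩
  obtain ⟨x, hx, hmax⟩ := hc.exists_isMaxOn hne (contA r₁).continuousOn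
  have hsup1 : sSup (A r₁ '' Icc (0:ℝ) (1/2)) = A r₁ x := by
    apply IsGreatest.csSup_eq
    refine ⟨mem_image_of_mem _ hx, ?_⟩
    rintro y ⟨z, hz, rfl⟩
    exact hmax hz
  have hxle : x ≤ 1/2 := hx.2
  have hx0 : 0 ≤ x := hx.1
  have hlt : A r₁ x < A r₂ x := by
    unfold A
    have h0 : 0 ≤ r₁ ^ 2 - x ^ 2 := by nlinarith
    have hab : r₁ ^ 2 - x ^ 2 < r₂ ^ 2 - x ^ 2 := by nlinarith
    have := Real.sqrt_lt_sqrt h0 hab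
    linarith
  have hle : A r₂ x ≤ sSup (A r₂ '' Icc (0:ℝ) (1/2)) := by
    apply le_csSup ((hc.image (contA r₂)).bddAbove)
    exact mem_image_of_mem _ hx
  calc sSup (A r₁ '' Icc (0:ℝ) (1/2)) = A r₁ x := hsup1
    _ < A r₂ x := hlt
    _ ≤ _ := hle

theorem stmt_10 :
    (∀ r₁ r₂ : ℝ, (Real.sqrt 2)⁻¹ ≤ r₁ → r₁ < r₂ → r₂ ≤ 1 →
      sSup (A r₁ '' Set.Icc (0 : ℝ) (1 / 2)) <
        sSup (A r₂ '' Set.Icc (0 : ℝ) (1 / 2))) ∧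
    (∀ r : ℝ, Real.sqrt 3 / 2 < r → r ≤ 1 →
      sSup (A (Real.sqrt 3 / 2) '' Set.Icc (0 : ℝ) (1 / 2)) <
        sSup (A r '' Set.Icc (0 : ℝ) (1 / 2))) := by
  constructor
  · intro r₁ r₂ ha hb _
    apply keyA _ _ _ hb
    have h2 : (1:ℝ) ≤ Real.sqrt 2 := by
      rw [show (1:ℝ) = Real.sqrt 1 by simp]
      exact Real.sqrt_le_sqrt (by norm_num)
    have hpos : 0 < Real.sqrt 2 := by positivity
    have : (1:ℝ)/2 ≤ (Real.sqrt 2)⁻¹ := by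
      rw [div_le_iff₀ (by norm_num), inv_mul_eq_div, le_div_iff₀ hpos]
      nlinarith [Real.sq_sqrt (by norm_num : (2:ℝ) ≥ 0)]
    linarith
  · intro r ha _
    apply keyA _ _ _ ha
    have h3 : (1:ℝ) ≤ Real.sqrt 3 := by
      rw [show (1:ℝ) = Real.sqrt 1 by simp]
      exact Real.sqrt_le_sqrt (by norm_num)
    linarith
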